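/- Closed form of the auxiliary power series F₁: for every complex x ≠ 0, Σ_{k=0}^{∞} x^{2k+1} / ((2k+1)(2k+2)!!) = (1 − e^{x²/2})/x − i√(π/2) · erf(ix/√2). -/

import Mathlib

open Nat Complex

/-- The error function, extended to complex argument via its entire power series
`erf(z) = (2/√π) Σ (−1)ⁿ z^(2n+1)/(n!(2n+1))`. -/
noncomputable def cerf (z : ℂ) : ℂ :=
  (2 / (Real.sqrt Real.pi : ℂ)) *
    ∑' n : ℕ, (-1:ℂ)^n * z^(2*n+1) / ((n.factorial : ℂ) * (2*(n:ℂ)+1))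

theorem F1_closed_form (x : ℂ) (hx : x ≠ 0) :
    ∑' k : ℕ, x^(2*k+1) / ((2*(k:ℂ)+1) * (((2*k+2)‼ : ℕ) : ℂ))
      = (1 - Complex.exp (x^2/2)) / x
        - Complex.I * (Real.sqrt (Real.pi / 2) : ℂ) *
            cerf (Complex.I * x / (Real.sqrt 2 : ℂ)) := by
  set y : ℂ := x^2/2 with hy
  have h2 : (Real.sqrt 2 : ℂ) ≠ 0 := by
    exact_mod_cast Real.sqrt_ne_zero'.mpr (by norm_num)
  have hπ : (Real.sqrt Real.pi : ℂ) ≠ 0 := by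
    exact_mod_cast Real.sqrt_ne_zero'.mpr Real.pi_pos
  have hodd : ∀ k : ℕ, (2*(k:ℂ)+1) ≠ 0 := by
    intro k
    have h : ((2*k+1 : ℕ) : ℂ) ≠ 0 := Nat.cast_ne_zero.mpr (Nat.succ_ne_zero _)
    have he : (2*(k:ℂ)+1) = ((2*k+1 : ℕ) : ℂ) := by push_cast; ring
    rw [he]; exact h
  have hfac : ∀ k : ℕ, ((k.factorial : ℕ) : ℂ) ≠ 0 := fun k =>
    Nat.cast_ne_zero.mpr k.factorial_ne_zero
  -- the two auxiliary series (no division by 2 inside variable powers)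
  set a : ℕ → ℂ := fun k =>
    x * (x^2)^k / ((2*(k:ℂ)+1) * ((2:ℂ)^k * (k.factorial : ℂ))) with ha
  set c : ℕ → ℂ := fun k =>
    (x^2)^(k+1) / ((2:ℂ)^(k+1) * (((k+1).factorial : ℕ) : ℂ) * x) with hc
  have hck : ∀ k : ℕ, c k = y^(k+1) / ((((k+1).factorial : ℕ) : ℂ) * x) := by
    intro k
    simp only [hc, hy, div_pow, div_div, mul_assoc]
  have Sexp : Summable fun n : ℕ => y ^ n / (n.factorial : ℂ) :=
    NormedSpace.expSeries_div_summable y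
  have Sa : Summable a := by
    have hg : Summable (fun k : ℕ => ‖x‖ * ((‖x^2‖/2) ^ k / k.factorial)) :=
      (Real.summable_pow_div_factorial (‖x^2‖/2)).mul_left ‖x‖
    apply Summable.of_norm_bounded hg
    intro k
    have hcast : (2*(k:ℂ)+1) * ((2:ℂ)^k * (k.factorial : ℂ))
        = (((2*k+1) * (2^k * k.factorial) : ℕ) : ℂ) := by
      push_cast; ring
    simp only [ha]
    rw [norm_div, norm_mul, norm_pow, hcast, Complex.norm_natCast]
    calc ‖x‖ * ‖x^2‖ ^ k / (((2*k+1) * (2^k * k.factorial) : ℕ) : ℝ)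
        ≤ ‖x‖ * ‖x^2‖ ^ k / (((2^k * k.factorial : ℕ)) : ℝ) := by
          apply div_le_div_of_nonneg_left (by positivity)
          · exact_mod_cast Nat.mul_pos (pow_pos (by norm_num : (0:ℕ) < 2) _) k.factorial_pos
          · exact_mod_cast Nat.le_mul_of_pos_left _ (Nat.succ_pos _)
      _ = ‖x‖ * ((‖x^2‖/2) ^ k / k.factorial) := by
          push_cast
          rw [div_pow]
          ring
  have Stail : Summable (fun k : ℕ => y^(k+1) / ((((k+1).factorial : ℕ)) : ℂ)) :=
    Sexp.comp_injective Nat.succ_injective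
  have Sc : Summable c := by
    apply Summable.congr (Stail.div_const x)
    intro k
    rw [hck k, div_div]
  -- termwise identity
  have hterm : ∀ k : ℕ,
      x^(2*k+1) / ((2*(k:ℂ)+1) * (((2*k+2)‼ : ℕ) : ℂ)) = a k - c k := by
    intro k
    have hdf : ((2*k+2)‼ : ℕ) = 2^(k+1) * (k+1).factorial := by
      have : 2*k+2 = 2*(k+1) := by ring
      rw [this, Nat.doubleFactorial_two_mul]
    rw [hdf]
    simp only [ha, hc]
    push_cast
    have hfs : (((k+1).factorial : ℕ) : ℂ) = ((k:ℂ)+1) * (k.factorial : ℂ) := by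
      push_cast [Nat.factorial_succ]; ring
    have hk1 : ((k:ℂ)+1) ≠ 0 := Nat.cast_add_one_ne_zero k
    have h2k : ((2:ℂ))^k ≠ 0 := pow_ne_zero _ two_ne_zero
    have h2k1 : ((2:ℂ))^(k+1) ≠ 0 := pow_ne_zero _ two_ne_zero
    rw [hfs]
    have hD1 : (2*(k:ℂ)+1) * ((2:ℂ)^k * (k.factorial : ℂ)) ≠ 0 :=
      mul_ne_zero (hodd k) (mul_ne_zero h2k (hfac k))
    have hD2 : (2:ℂ)^(k+1) * (((k:ℂ)+1) * (k.factorial : ℂ)) * x ≠ 0 :=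
      mul_ne_zero (mul_ne_zero h2k1 (mul_ne_zero hk1 (hfac k))) hx
    have hD : (2*(k:ℂ)+1) * ((2:ℂ)^(k+1) * (((k:ℂ)+1) * (k.factorial : ℂ))) ≠ 0 :=
      mul_ne_zero (hodd k) (mul_ne_zero h2k1 (mul_ne_zero hk1 (hfac k)))
    rw [div_sub_div _ _ hD1 hD2, div_eq_div_iff hD (mul_ne_zero hD1 hD2)]
    ring
  rw [tsum_congr hterm, Sa.tsum_sub Sc]
  -- evaluate ∑ c
  have hcsum : ∑' k, c k = (Complex.exp y - 1) / x := by
    have hexp : Complex.exp y = ∑' n : ℕ, y ^ n / (n.factorial : ℂ) := by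
      rw [Complex.exp_eq_exp_ℂ, NormedSpace.exp_eq_tsum_div]
    have h0 : ∑' n : ℕ, y ^ n / (n.factorial : ℂ)
        = y^0 / (((0:ℕ).factorial : ℕ) : ℂ)
          + ∑' k : ℕ, y^(k+1) / ((((k+1).factorial : ℕ)) : ℂ) :=
      Sexp.tsum_eq_zero_add
    have htail : ∑' k : ℕ, y^(k+1) / ((((k+1).factorial : ℕ)) : ℂ)
        = Complex.exp y - 1 := by
      rw [hexp, h0]; simp
    calc ∑' k, c k
        = ∑' k : ℕ, (y^(k+1) / ((((k+1).factorial : ℕ)) : ℂ)) / x := by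
          apply tsum_congr; intro k; rw [hck k, div_div]
      _ = (∑' k : ℕ, y^(k+1) / ((((k+1).factorial : ℕ)) : ℂ)) / x :=
          tsum_div_const
      _ = (Complex.exp y - 1) / x := by rw [htail]
  -- evaluate the cerf term
  have hcerf : cerf (Complex.I * x / (Real.sqrt 2 : ℂ))
      = (2 / (Real.sqrt Real.pi : ℂ)) * ((Complex.I / (Real.sqrt 2 : ℂ)) * ∑' k, a k) := by
    rw [cerf]
    congr 1
    rw [← tsum_mul_left]
    apply tsum_congr
    intro n
    have hz : (Complex.I * x / (Real.sqrt 2 : ℂ))^(2*n+1)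
        = Complex.I^(2*n+1) * x^(2*n+1) / ((Real.sqrt 2 : ℂ))^(2*n+1) := by
      rw [div_pow, mul_pow]
    have hI : Complex.I^(2*n+1) = (-1:ℂ)^n * Complex.I := by
      rw [pow_succ, pow_mul, Complex.I_sq]
    have hss : ((Real.sqrt 2 : ℂ))^2 = 2 := by
      rw [← Complex.ofReal_pow, Real.sq_sqrt (by norm_num : (0:ℝ) ≤ 2)]
      norm_num
    have hs : ((Real.sqrt 2 : ℂ))^(2*n+1) = 2^n * (Real.sqrt 2 : ℂ) := by
      rw [pow_succ, pow_mul, hss]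
    have hx2 : x^(2*n+1) = x * (x^2)^n := by ring
    rw [hz, hI, hs, hx2]
    simp only [ha]
    have h11 : ((-1:ℂ))^n * ((-1:ℂ))^n = 1 := by
      rw [← pow_add, ← two_mul, pow_mul]; norm_num
    have collapse : (-1:ℂ)^n * ((-1:ℂ)^n * Complex.I * (x * (x^2)^n) / ((2:ℂ)^n * (Real.sqrt 2 : ℂ)))
        = Complex.I * (x * (x^2)^n) / ((2:ℂ)^n * (Real.sqrt 2 : ℂ)) := by
      rw [← mul_div_assoc]
      congr 1
      rw [show (-1:ℂ)^n * ((-1:ℂ)^n * Complex.I * (x * (x^2)^n))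
          = ((-1:ℂ)^n * (-1:ℂ)^n) * (Complex.I * (x * (x^2)^n)) from by ring, h11, one_mul]
    rw [collapse]
    field_simp [hodd n, hfac n]
  rw [hcsum, hcerf]
  -- final algebra
  have hsq : (Real.sqrt (Real.pi/2) : ℂ) * (Real.sqrt 2 : ℂ) = (Real.sqrt Real.pi : ℂ) := by
    rw [← Complex.ofReal_mul, ← Real.sqrt_mul (by positivity)]
    norm_num
  have key : Complex.I * (Real.sqrt (Real.pi / 2) : ℂ) *
      ((2 / (Real.sqrt Real.pi : ℂ)) * ((Complex.I / (Real.sqrt 2 : ℂ)) * ∑' k, a k))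
      = - ∑' k, a k := by
    have h1 : (Real.sqrt (Real.pi/2) : ℂ) = (Real.sqrt Real.pi : ℂ) / (Real.sqrt 2 : ℂ) := by
      rw [eq_div_iff h2]; exact hsq
    have hs2 : (Real.sqrt 2 : ℂ) * (Real.sqrt 2 : ℂ) = 2 := by
      rw [← Complex.ofReal_mul, Real.mul_self_sqrt (by norm_num : (0:ℝ) ≤ 2)]
      norm_num
    rw [h1]
    calc Complex.I * ((Real.sqrt Real.pi : ℂ)/(Real.sqrt 2 : ℂ)) *
        ((2 / (Real.sqrt Real.pi : ℂ)) * ((Complex.I / (Real.sqrt 2 : ℂ)) * ∑' k, a k))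
        = (Complex.I*Complex.I) * (∑' k, a k) * ((2*(Real.sqrt Real.pi : ℂ)) /
            ((Real.sqrt Real.pi : ℂ)*((Real.sqrt 2 : ℂ)*(Real.sqrt 2 : ℂ)))) := by
          ring
      _ = - ∑' k, a k := by
          rw [Complex.I_mul_I, hs2]
          have hone : (2*(Real.sqrt Real.pi : ℂ))/((Real.sqrt Real.pi : ℂ)*2) = 1 := by
            rw [mul_comm]; exact div_self (mul_ne_zero hπ two_ne_zero)
          rw [hone]; ring
  rw [key]
  ring
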